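/- Let F be a field, V an infinite-dimensional F-vector space, V* its dual, V̄ = V ⊕ V*, and q the quadratic form on V̄ given by q(a,α) = α(a). Then every generator of the quadric S_q admits a complement: for every maximal totally q-singular subspace W of V̄ there exists a maximal totally q-singular subspace W' with W ∩ W' = 0 and W + W' = V̄. -/

import Mathlib

/-- The quadratic form `q(a,α) = α(a)` on `V̄ = V ⊕ V*`. -/
def quadForm {F V : Type*} [Field F] [AddCommGroup V] [Module F V]
    (p : V × Module.Dual F V) : F :=
  p.2 p.1

/-- A totally `q`-singular subspace of `V̄`. -/
def QTotSing {F V : Type*} [Field F] [AddCommGroup V] [Module F V]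
    (W : Submodule F (V × Module.Dual F V)) : Prop :=
  ∀ w ∈ W, quadForm w = 0

/-- A generator of the quadric `S_q`: a maximal totally `q`-singular subspace. -/
def QGen {F V : Type*} [Field F] [AddCommGroup V] [Module F V]
    (W : Submodule F (V × Module.Dual F V)) : Prop :=
  QTotSing W ∧
    ∀ W' : Submodule F (V × Module.Dual F V), QTotSing W' → W ≤ W' → W' = W

/-- Double annihilator: if every functional vanishing on `C` vanishes on `x`, then `x ∈ C`. -/
lemma mem_of_forall_dualAnnihilator {F V : Type*} [Field F] [AddCommGroup V] [Module F V]
    (C : Submodule F V) (x : V) (h : ∀ β ∈ C.dualAnnihilator, β x = 0) : x ∈ C := by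
  rw [← Submodule.Quotient.mk_eq_zero C,
    ← Module.forall_dual_apply_eq_zero_iff F (Submodule.Quotient.mk x : V ⧸ C)]
  intro f
  have hmem : f.comp C.mkQ ∈ C.dualAnnihilator := by
    rw [Submodule.mem_dualAnnihilator]
    intro w hw
    simp [(Submodule.Quotient.mk_eq_zero C).2 hw]
  simpa using h _ hmem

/-- Every generator of the quadric `S_q` on `V̄ = V ⊕ V*` admits a complement. -/
theorem stmt_15 {F V : Type*} [Field F] [AddCommGroup V] [Module F V]
    (hV : ¬ Module.Finite F V)
    (W : Submodule F (V × Module.Dual F V)) (hW : QGen W) :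
    ∃ W' : Submodule F (V × Module.Dual F V),
      QGen W' ∧ W ⊓ W' = ⊥ ∧ W ⊔ W' = ⊤ := by
  classical
  set U : Submodule F V := W.map (LinearMap.fst F V (Module.Dual F V)) with hU
  obtain ⟨C, hC⟩ := Submodule.exists_isCompl U
  -- the candidate complement
  refine ⟨C.prod C.dualAnnihilator, ⟨?_, ?_⟩, ?_, ?_⟩
  · -- totally singular
    rintro ⟨c, β⟩ hw
    rw [Submodule.mem_prod] at hw
    exact Submodule.mem_dualAnnihilator _ |>.1 hw.2 c hw.1
  · -- maximal
    intro W'' hsing hle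
    refine le_antisymm (fun z hz => ?_) hle
    have hz0 : z.2 z.1 = 0 := hsing z hz
    rw [Submodule.mem_prod]
    constructor
    · refine mem_of_forall_dualAnnihilator C z.1 (fun β hβ => ?_)
      have h0 : ((0 : V), β) ∈ W'' := hle (Submodule.mem_prod.2 ⟨C.zero_mem, hβ⟩)
      have := hsing _ (W''.add_mem hz h0)
      simp only [quadForm, Prod.snd_add, Prod.fst_add, LinearMap.add_apply, map_add,
        add_zero] at this
      simpa [hz0] using this
    · rw [Submodule.mem_dualAnnihilator]
      intro c hc
      have h0 : ((c : V), (0 : Module.Dual F V)) ∈ W'' :=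
        hle (Submodule.mem_prod.2 ⟨hc, Submodule.zero_mem _⟩)
      have := hsing _ (W''.add_mem hz h0)
      simp only [quadForm, Prod.snd_add, Prod.fst_add, LinearMap.add_apply, map_add,
        LinearMap.zero_apply, add_zero] at this
      simpa [hz0] using this
  · -- trivial intersection
    rw [eq_bot_iff]
    rintro z hz
    rw [Submodule.mem_inf, Submodule.mem_prod] at hz
    obtain ⟨hzW, hz1, hz2⟩ := hz
    have hz1U : z.1 ∈ U := ⟨z, hzW, rfl⟩
    have h1 : z.1 = 0 := by
      have := hC.disjoint.le_bot ⟨hz1U, hz1⟩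
      simpa using this
    have h2U : ∀ u ∈ U, z.2 u = 0 := by
      rintro u ⟨y, hyW, rfl⟩
      have hy0 : y.2 y.1 = 0 := hW.1 y hyW
      have := hW.1 _ (W.add_mem hzW hyW)
      simp only [quadForm, Prod.snd_add, Prod.fst_add, LinearMap.add_apply, map_add, h1,
        zero_add, hy0, add_zero] at this
      simpa using this
    have h2 : z.2 = 0 := by
      ext v
      have hv : v ∈ U ⊔ C := by rw [hC.sup_eq_top]; trivial
      obtain ⟨u, hu, c, hc, rfl⟩ := Submodule.mem_sup.mp hv
      simp [map_add, h2U u hu, (Submodule.mem_dualAnnihilator z.2).1 hz2 c hc]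
    simp [Submodule.mem_bot, Prod.ext_iff, h1, h2]
  · -- spanning
    rw [eq_top_iff]
    rintro ⟨v, α⟩ -
    have hv : v ∈ U ⊔ C := by rw [hC.sup_eq_top]; trivial
    obtain ⟨u, hu, c, hc, rfl⟩ := Submodule.mem_sup.mp hv
    obtain ⟨y, hyW, hy1⟩ := hu
    -- projection onto C along U
    set pr : V →ₗ[F] V := C.subtype.comp (C.linearProjOfIsCompl U hC.symm) with hpr
    set β : Module.Dual F V := α - y.2 with hβ
    set β₁ : Module.Dual F V := β.comp pr with hβ₁
    have hβ₁U : β₁ ∈ U.dualAnnihilator := by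
      rw [Submodule.mem_dualAnnihilator]
      intro w hw
      have : (C.linearProjOfIsCompl U hC.symm) w = 0 :=
        Submodule.linearProjOfIsCompl_apply_right' hC.symm hw
      simp [hβ₁, hpr, LinearMap.comp_apply, this]
    have hβ₂C : β - β₁ ∈ C.dualAnnihilator := by
      rw [Submodule.mem_dualAnnihilator]
      intro w hw
      have : (C.linearProjOfIsCompl U hC.symm) w = ⟨w, hw⟩ :=
        Submodule.linearProjOfIsCompl_apply_left hC.symm ⟨w, hw⟩
      simp [hβ₁, hpr, LinearMap.comp_apply, this]
    -- (0, β₁) ∈ W by maximality of W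
    have hβ₁W : ((0 : V), β₁) ∈ W := by
      have hsing : QTotSing (W ⊔ F ∙ ((0 : V), β₁)) := by
        rintro w hw
        obtain ⟨a, ha, b, hb, rfl⟩ := Submodule.mem_sup.mp hw
        obtain ⟨t, rfl⟩ := Submodule.mem_span_singleton.mp hb
        have ha0 : a.2 a.1 = 0 := hW.1 a ha
        have ha1 : β₁ a.1 = 0 :=
          (Submodule.mem_dualAnnihilator β₁).1 hβ₁U a.1 ⟨a, ha, rfl⟩
        simp [quadForm, Prod.smul_def, ha0, ha1]
      have := hW.2 _ hsing le_sup_left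
      rw [← this]
      exact Submodule.mem_sup_right (Submodule.mem_span_singleton_self _)
    -- assemble
    have hy1' : y.1 = u := hy1
    have key : ((u + c, α) : V × Module.Dual F V)
        = y + ((0 : V), β₁) + (c, β - β₁) := by
      rw [Prod.ext_iff]
      refine ⟨by simp [hy1'], ?_⟩
      simp only [Prod.snd_add]
      rw [hβ]
      abel
    rw [key]
    refine Submodule.add_mem _ (Submodule.add_mem _ ?_ ?_) ?_
    · exact Submodule.mem_sup_left hyW
    · exact Submodule.mem_sup_left hβ₁W
    · exact Submodule.mem_sup_right (Submodule.mem_prod.2 ⟨hc, hβ₂C⟩)
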